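/- Let D_N^m be the N×N upper-triangular Toeplitz matrix over 𝔽₂ whose first row has ones exactly in positions 1 and m+1 (with D_N^0 the identity), and let G_n = F^{⊗n}. Then for any 0 ≤ m ≤ N−1, D_N^m G_n = G_n ∑_{l : g_{m+1, l+1} = 1, 1 ≤ l ≤ N−1} C_N^l. -/
import Mathlib

section Helpers

lemma sub_iff (k i : ℕ) : k &&& i = k ↔ ∀ b, k.testBit b = true → i.testBit b = true := by
  constructor
  · intro h b hb
    have h2 : (k &&& i).testBit b = k.testBit b := by rw [h]
    rw [Nat.testBit_and, hb] at h2
    simpa using h2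
  · intro h
    apply Nat.eq_of_testBit_eq
    intro b
    rw [Nat.testBit_and]
    rcases hk : k.testBit b with _ | _
    · simp
    · simp [h b hk]

lemma sub_split (k i : ℕ) :
    k &&& i = k ↔ ((k % 2 = 1 → i % 2 = 1) ∧ (k / 2) &&& (i / 2) = k / 2) := by
  rw [sub_iff, sub_iff]
  constructor
  · intro h
    refine ⟨fun hk => ?_, fun b hb => ?_⟩
    · have := h 0
      simp only [Nat.testBit_zero, decide_eq_true_eq] at this
      exact this hk
    · have := h (b + 1)
      rw [Nat.testBit_add_one, Nat.testBit_add_one] at this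
      exact this hb
  · rintro ⟨h0, h⟩ b hb
    cases b with
    | zero =>
      simp only [Nat.testBit_zero, decide_eq_true_eq] at hb ⊢
      exact h0 hb
    | succ b =>
      rw [Nat.testBit_add_one] at hb ⊢
      exact h b hb

lemma lucas2 (i : ℕ) : ∀ k : ℕ, ((i.choose k : ZMod 2)) = if k &&& i = k then 1 else 0 := by
  induction i using Nat.strong_induction_on with
  | _ i ih =>
    intro k
    rcases Nat.eq_zero_or_pos i with h0 | hpos
    · subst h0
      cases k with
      | zero => simp
      | succ k => simp [Nat.choose, Nat.succ_ne_zero]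
    · have hmod := Choose.choose_modEq_choose_mod_mul_choose_div_nat (n := i) (k := k) (p := 2)
      have hcast : ((i.choose k : ZMod 2)) =
          ((Nat.choose (i % 2) (k % 2) * Nat.choose (i / 2) (k / 2) : ℕ) : ZMod 2) :=
        (ZMod.natCast_eq_natCast_iff _ _ _).mpr hmod
      rw [hcast]
      push_cast
      rw [ih (i / 2) (Nat.div_lt_self hpos (by norm_num)) (k / 2)]
      have h2 : ((Nat.choose (i % 2) (k % 2) : ZMod 2)) =
          if (k % 2 = 1 → i % 2 = 1) then 1 else 0 := by
        have hi := Nat.mod_two_eq_zero_or_one i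
        have hk := Nat.mod_two_eq_zero_or_one k
        rcases hi with hi | hi <;> rcases hk with hk | hk <;> rw [hi, hk] <;> norm_num
      rw [h2, show (if k &&& i = k then (1 : ZMod 2) else 0) =
          if ((k % 2 = 1 → i % 2 = 1) ∧ (k / 2) &&& (i / 2) = k / 2) then 1 else 0 from
        if_congr (sub_split k i) rfl rfl]
      split_ifs with h1 h2 h3 <;> simp_all

lemma conv_eq (i m t : ℕ) :
    (∑ k ∈ Finset.range (t + 1),
      (if k &&& i = k then (1 : ZMod 2) else 0) * (if (t - k) &&& m = (t - k) then 1 else 0)) =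
    if t &&& (i + m) = t then 1 else 0 := by
  rw [← lucas2, Nat.add_choose_eq, Nat.cast_sum,
    Finset.Nat.sum_antidiagonal_eq_sum_range_succ_mk]
  apply Finset.sum_congr rfl
  intro k _
  push_cast
  rw [lucas2, lucas2]

lemma land_le_of_eq {k i : ℕ} (h : k &&& i = k) : k ≤ i := h ▸ Nat.and_le_right

lemma testBit_add_pow {n j : ℕ} (hj : j < 2 ^ n) (b : ℕ) :
    (2 ^ n + j).testBit b = (if b = n then true else j.testBit b) := by
  rcases lt_trichotomy b n with h | h | h
  · rw [if_neg h.ne, Nat.testBit_two_pow_add_gt h]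
  · subst h
    rw [if_pos rfl, Nat.testBit_two_pow_add_eq, Nat.testBit_lt_two_pow hj]
    rfl
  · rw [if_neg h.ne']
    rw [Nat.testBit_lt_two_pow, Nat.testBit_lt_two_pow]
    · exact lt_of_lt_of_le hj (Nat.pow_le_pow_right (by norm_num) h.le)
    · calc 2 ^ n + j < 2 ^ n + 2 ^ n := by omega
        _ = 2 ^ (n + 1) := by ring
        _ ≤ 2 ^ b := Nat.pow_le_pow_right (by norm_num) h

lemma final_id (n i j m : ℕ) (hi : i < 2 ^ n) (hj : j < 2 ^ n) (hm : m < 2 ^ n) :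
    (if j &&& (i + m) = j then (1 : ZMod 2) else 0) +
      (if (j + 2 ^ n) &&& (i + m) = j + 2 ^ n then 1 else 0) =
    if (i + m < 2 ^ n ∧ j &&& (i + m) = j) then 1 else 0 := by
  by_cases hlt : i + m < 2 ^ n
  · have h2 : ¬((j + 2 ^ n) &&& (i + m) = j + 2 ^ n) := by
      intro h
      have := land_le_of_eq h
      omega
    rw [if_neg h2, add_zero]
    exact if_congr (Iff.intro (fun h => ⟨hlt, h⟩) (fun h => h.2)) rfl rfl
  · -- i + m ≥ 2^n; write i+m = 2^n + r
    have hr : i + m = 2 ^ n + (i + m - 2 ^ n) := by omega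
    set r := i + m - 2 ^ n with hrdef
    have hrlt : r < 2 ^ n := by omega
    have hbit : ∀ b, (i + m).testBit b = (if b = n then true else r.testBit b) := by
      intro b; rw [hr]; exact testBit_add_pow hrlt b
    have hjbit : ∀ b, (j + 2 ^ n).testBit b = (if b = n then true else j.testBit b) := by
      intro b; rw [add_comm]; exact testBit_add_pow hj b
    have hiff : (j &&& (i + m) = j) ↔ ((j + 2 ^ n) &&& (i + m) = j + 2 ^ n) := by
      rw [sub_iff, sub_iff]
      constructor
      · intro h b hb
        rw [hjbit] at hb
        rw [hbit]
        split_ifs with hbn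
        · rfl
        · rw [if_neg hbn] at hb
          have := h b hb
          rwa [hbit, if_neg hbn] at this
      · intro h b hb
        have hbn : b ≠ n := by
          intro he; subst he; rw [Nat.testBit_lt_two_pow hj] at hb; exact Bool.false_ne_true hb
        have : (j + 2 ^ n).testBit b = true := by rw [hjbit, if_neg hbn]; exact hb
        exact h b this
    have hno : ¬(i + m < 2 ^ n ∧ j &&& (i + m) = j) := fun h => hlt h.1
    rw [if_neg hno]
    by_cases hA : j &&& (i + m) = j
    · rw [if_pos hA, if_pos (hiff.mp hA)]
      decide
    · rw [if_neg hA, if_neg (fun h => hA (hiff.mpr h)), add_zero]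

lemma land_le_of_eq' {k i : ℕ} (h : k &&& i = k) : k ≤ i := h ▸ Nat.and_le_right

lemma sum_pairs (N i m t : ℕ) (hi : i < N) (hm : m < N) :
    (∑ k ∈ Finset.range N, ∑ l ∈ Finset.range N,
      (if k &&& i = k then (1 : ZMod 2) else 0) * (if l &&& m = l then 1 else 0) *
        (if k + l = t then 1 else 0)) =
    ∑ k ∈ Finset.range (t + 1),
      (if k &&& i = k then (1 : ZMod 2) else 0) *
        (if (t - k) &&& m = (t - k) then 1 else 0) := by
  set X : ℕ → ZMod 2 := fun k =>
    (if k &&& i = k then (1 : ZMod 2) else 0) * (if (t - k) &&& m = (t - k) then 1 else 0)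
    with hX
  have hXzero : ∀ k, N ≤ k → X k = 0 := by
    intro k hk
    have h : ¬(k &&& i = k) := fun h => by have := land_le_of_eq' h; omega
    rw [hX]
    simp only
    rw [if_neg h, zero_mul]
  have step1 : ∀ k, (∑ l ∈ Finset.range N,
      (if k &&& i = k then (1 : ZMod 2) else 0) * (if l &&& m = l then 1 else 0) *
        (if k + l = t then 1 else 0)) = if t - k < N then (if k ≤ t then X k else 0) else 0 := by
    intro k
    rw [show (∑ l ∈ Finset.range N,
      (if k &&& i = k then (1 : ZMod 2) else 0) * (if l &&& m = l then 1 else 0) *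
        (if k + l = t then 1 else 0)) = ∑ l ∈ Finset.range N,
          (if l = t - k then (if k ≤ t then X k else 0) else 0) from
      Finset.sum_congr rfl fun l _ => ?_, Finset.sum_ite_eq']
    · simp only [Finset.mem_range]
    by_cases h1 : l = t - k
    · subst h1
      rw [if_pos rfl]
      by_cases h2 : k ≤ t
      · have hkl : k + (t - k) = t := by omega
        rw [if_pos hkl, mul_one, if_pos h2, hX]
      · have hkl : ¬(k + (t - k) = t) := by omega
        rw [if_neg hkl, mul_zero, if_neg h2]
    · have hkl : ¬(k + l = t) := fun h => h1 (by omega)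
      rw [if_neg hkl, mul_zero, if_neg h1]
  have step2 : ∀ k, (if t - k < N then (if k ≤ t then X k else 0) else 0) =
      (if k ≤ t then X k else 0) := by
    intro k
    by_cases h1 : t - k < N
    · rw [if_pos h1]
    · rw [if_neg h1]
      by_cases h2 : k ≤ t
      · have h : ¬((t - k) &&& m = t - k) := fun h => by have := land_le_of_eq' h; omega
        rw [if_pos h2, hX]
        simp only
        rw [if_neg h, mul_zero]
      · rw [if_neg h2]
  have hsub1 : Finset.range N ⊆ Finset.range (max N (t + 1)) :=
    Finset.range_subset_range.mpr (le_max_left _ _)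
  have hsub2 : Finset.range (t + 1) ⊆ Finset.range (max N (t + 1)) :=
    Finset.range_subset_range.mpr (le_max_right _ _)
  calc (∑ k ∈ Finset.range N, ∑ l ∈ Finset.range N,
      (if k &&& i = k then (1 : ZMod 2) else 0) * (if l &&& m = l then 1 else 0) *
        (if k + l = t then 1 else 0))
      = ∑ k ∈ Finset.range N, (if k ≤ t then X k else 0) := by
        refine Finset.sum_congr rfl fun k _ => ?_
        rw [step1 k, step2 k]
    _ = ∑ k ∈ Finset.range (max N (t + 1)), (if k ≤ t then X k else 0) := by
        refine Finset.sum_subset hsub1 fun k _ hk => ?_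
        rw [Finset.mem_range, not_lt] at hk
        by_cases h2 : k ≤ t
        · rw [if_pos h2, hXzero k hk]
        · rw [if_neg h2]
    _ = ∑ k ∈ Finset.range (t + 1), (if k ≤ t then X k else 0) := by
        refine (Finset.sum_subset hsub2 fun k _ hk => ?_).symm
        rw [Finset.mem_range, not_lt] at hk
        rw [if_neg (by omega)]
    _ = ∑ k ∈ Finset.range (t + 1), X k := by
        refine Finset.sum_congr rfl fun k hk => ?_
        rw [Finset.mem_range] at hk
        rw [if_pos (by omega)]

lemma key (n i m j : ℕ) (hi : i < 2 ^ n) (hj : j < 2 ^ n) (hm : m < 2 ^ n) :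
    (∑ k ∈ Finset.range (2 ^ n), ∑ l ∈ Finset.range (2 ^ n),
      (if k &&& i = k then (1 : ZMod 2) else 0) * (if l &&& m = l then 1 else 0) *
        (if (k + l) % 2 ^ n = j then 1 else 0)) =
    if (i + m < 2 ^ n ∧ j &&& (i + m) = j) then 1 else 0 := by
  set N := 2 ^ n with hN
  have hsplit : ∀ k ∈ Finset.range N, ∀ l ∈ Finset.range N,
      (if (k + l) % N = j then (1 : ZMod 2) else 0) =
        (if k + l = j then 1 else 0) + (if k + l = j + N then 1 else 0) := by
    intro k hk l hl
    rw [Finset.mem_range] at hk hl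
    rcases lt_or_ge (k + l) N with h | h
    · have hne : ¬(k + l = j + N) := by omega
      rw [Nat.mod_eq_of_lt h, if_neg hne, add_zero]
    · have hmod : (k + l) % N = k + l - N := by
        rw [Nat.mod_eq_sub_mod h, Nat.mod_eq_of_lt (by omega)]
      have hne : ¬(k + l = j) := by omega
      rw [hmod, if_neg hne, zero_add]
      exact if_congr (by omega) rfl rfl
  calc (∑ k ∈ Finset.range N, ∑ l ∈ Finset.range N,
      (if k &&& i = k then (1 : ZMod 2) else 0) * (if l &&& m = l then 1 else 0) *
        (if (k + l) % N = j then 1 else 0))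
      = (∑ k ∈ Finset.range N, ∑ l ∈ Finset.range N,
          ((if k &&& i = k then (1 : ZMod 2) else 0) * (if l &&& m = l then 1 else 0) *
            (if k + l = j then 1 else 0) +
          (if k &&& i = k then (1 : ZMod 2) else 0) * (if l &&& m = l then 1 else 0) *
            (if k + l = j + N then 1 else 0))) := by
        refine Finset.sum_congr rfl fun k hk => Finset.sum_congr rfl fun l hl => ?_
        rw [hsplit k hk l hl, mul_add]
    _ = (∑ k ∈ Finset.range N, ∑ l ∈ Finset.range N,
          (if k &&& i = k then (1 : ZMod 2) else 0) * (if l &&& m = l then 1 else 0) *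
            (if k + l = j then 1 else 0)) +
        (∑ k ∈ Finset.range N, ∑ l ∈ Finset.range N,
          (if k &&& i = k then (1 : ZMod 2) else 0) * (if l &&& m = l then 1 else 0) *
            (if k + l = j + N then 1 else 0)) := by
        rw [← Finset.sum_add_distrib]
        exact Finset.sum_congr rfl fun k _ => Finset.sum_add_distrib
    _ = (if j &&& (i + m) = j then (1 : ZMod 2) else 0) +
        (if (j + N) &&& (i + m) = j + N then 1 else 0) := by
        rw [sum_pairs N i m j hi hm, sum_pairs N i m (j + N) hi hm, conv_eq, conv_eq]
    _ = if (i + m < N ∧ j &&& (i + m) = j) then 1 else 0 := final_id n i j m hi hj hm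

end Helpers


/-- `G_n = F^{⊗n}` for `F = [[1,0],[1,1]]` over `𝔽₂` (0-indexed). -/
def polarG (n : ℕ) : Matrix (Fin (2^n)) (Fin (2^n)) (ZMod 2) :=
  Matrix.of fun i j => if j.val &&& i.val = j.val then 1 else 0

/-- The `N×N` clockwise cyclic shift matrix by `j` places over `𝔽₂`. -/
def cyc (N j : ℕ) : Matrix (Fin N) (Fin N) (ZMod 2) :=
  Matrix.of fun i k => if (i.val + j) % N = k.val then 1 else 0

/-- `D_N^m`: the upper-triangular Toeplitz matrix over `𝔽₂` with ones on the main
diagonal and on the `m`-th superdiagonal (its first row has ones exactly in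
positions `1` and `m+1`); `D_N^0` is the identity. -/
def toepD (N m : ℕ) : Matrix (Fin N) (Fin N) (ZMod 2) :=
  Matrix.of fun i j => if j.val = i.val ∨ j.val = i.val + m then 1 else 0

lemma main_ne (n : ℕ) (mm : Fin (2^n)) (hm1 : 1 ≤ mm.val) :
    toepD (2^n) mm.val * polarG n =
      polarG n * ∑ l ∈ Finset.univ.filter
          (fun l : Fin (2^n) => 1 ≤ l.val ∧ polarG n mm l = 1), cyc (2^n) l.val := by
  have hN : (0:ℕ) < 2^n := Nat.two_pow_pos n
  have hmlt : mm.val < 2^n := mm.isLt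
  set s : Finset (Fin (2^n)) := Finset.univ.filter
      (fun l : Fin (2^n) => 1 ≤ l.val ∧ polarG n mm l = 1) with hs
  ext i j
  rw [Matrix.mul_apply, Matrix.mul_apply]
  simp only [Matrix.sum_apply]
  have hchar : ∀ a : ZMod 2, a + a = 0 := by decide
  set W : ℕ → ZMod 2 := fun l => ∑ k ∈ Finset.range (2^n),
      (if k &&& i.val = k then (1:ZMod 2) else 0) * (if (k + l) % 2^n = j.val then 1 else 0)
    with hW
  -- RHS = ∑_{l ∈ s} W l.val
  have hRHS : (∑ k : Fin (2^n), polarG n i k * ∑ l ∈ s, cyc (2^n) l.val k j)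
      = ∑ l ∈ s, W l.val := by
    calc (∑ k : Fin (2^n), polarG n i k * ∑ l ∈ s, cyc (2^n) l.val k j)
        = ∑ k : Fin (2^n), ∑ l ∈ s, polarG n i k * cyc (2^n) l.val k j :=
          Finset.sum_congr rfl fun k _ => Finset.mul_sum _ _ _
      _ = ∑ l ∈ s, ∑ k : Fin (2^n), polarG n i k * cyc (2^n) l.val k j := Finset.sum_comm
      _ = ∑ l ∈ s, W l.val := by
          refine Finset.sum_congr rfl fun l _ => ?_
          rw [hW]
          simp only [polarG, cyc, Matrix.of_apply]
          exact (Fin.sum_univ_eq_sum_range (fun k =>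
            (if k &&& i.val = k then (1:ZMod 2) else 0) *
              (if (k + l.val) % 2^n = j.val then 1 else 0)) (2^n))
  -- the filter as an insert
  have h0fin : (⟨0, hN⟩ : Fin (2^n)) ∉ s := by
    rw [hs]
    simp
  have hins : Finset.univ.filter (fun l : Fin (2^n) => l.val &&& mm.val = l.val)
      = insert (⟨0, hN⟩ : Fin (2^n)) s := by
    ext l
    simp only [Finset.mem_filter, Finset.mem_univ, true_and, Finset.mem_insert, hs]
    constructor
    · intro h
      by_cases hl0 : l.val = 0
      · left; exact Fin.ext hl0
      · right
        refine ⟨by omega, ?_⟩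
        simp only [polarG, Matrix.of_apply]
        rw [if_pos h]
    · rintro (rfl | ⟨h1, h2⟩)
      · exact Nat.zero_and mm.val
      · by_contra hq
        simp only [polarG, Matrix.of_apply] at h2
        rw [if_neg hq] at h2
        exact zero_ne_one h2
  have hfull : (∑ l : Fin (2^n), (if l.val &&& mm.val = l.val then (1:ZMod 2) else 0) * W l.val)
      = W 0 + ∑ l ∈ s, W l.val := by
    rw [show (∑ l : Fin (2^n), (if l.val &&& mm.val = l.val then (1:ZMod 2) else 0) * W l.val)
        = ∑ l : Fin (2^n), (if l.val &&& mm.val = l.val then W l.val else 0) from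
      Finset.sum_congr rfl fun l _ => by rw [ite_mul, one_mul, zero_mul]]
    rw [← Finset.sum_filter, hins, Finset.sum_insert h0fin]
  have hkey : (∑ l : Fin (2^n), (if l.val &&& mm.val = l.val then (1:ZMod 2) else 0) * W l.val)
      = if (i.val + mm.val < 2^n ∧ j.val &&& (i.val + mm.val) = j.val) then 1 else 0 := by
    calc (∑ l : Fin (2^n), (if l.val &&& mm.val = l.val then (1:ZMod 2) else 0) * W l.val)
        = ∑ l ∈ Finset.range (2^n), (if l &&& mm.val = l then (1:ZMod 2) else 0) * W l :=
          Fin.sum_univ_eq_sum_range (fun l => (if l &&& mm.val = l then (1:ZMod 2) else 0) * W l)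
            (2^n)
      _ = ∑ l ∈ Finset.range (2^n), ∑ k ∈ Finset.range (2^n),
            (if k &&& i.val = k then (1:ZMod 2) else 0) * (if l &&& mm.val = l then 1 else 0) *
              (if (k + l) % 2^n = j.val then 1 else 0) := by
          refine Finset.sum_congr rfl fun l _ => ?_
          rw [hW, Finset.mul_sum]
          exact Finset.sum_congr rfl fun k _ => by ring
      _ = ∑ k ∈ Finset.range (2^n), ∑ l ∈ Finset.range (2^n),
            (if k &&& i.val = k then (1:ZMod 2) else 0) * (if l &&& mm.val = l then 1 else 0) *
              (if (k + l) % 2^n = j.val then 1 else 0) := Finset.sum_comm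
      _ = if (i.val + mm.val < 2^n ∧ j.val &&& (i.val + mm.val) = j.val) then 1 else 0 :=
          key n i.val mm.val j.val i.isLt j.isLt hmlt
  have hW0 : W 0 = if j.val &&& i.val = j.val then 1 else 0 := by
    calc W 0 = ∑ k ∈ Finset.range (2^n),
        (if k = j.val then (if k &&& i.val = k then (1:ZMod 2) else 0) else 0) := by
          rw [hW]
          refine Finset.sum_congr rfl fun k hk => ?_
          rw [Finset.mem_range] at hk
          rw [Nat.add_zero, Nat.mod_eq_of_lt hk, mul_ite, mul_one, mul_zero]
      _ = if j.val &&& i.val = j.val then 1 else 0 := by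
          rw [Finset.sum_ite_eq', if_pos (Finset.mem_range.mpr j.isLt)]
  have hLHS : (∑ k : Fin (2^n), toepD (2^n) mm.val i k * polarG n k j)
      = (if j.val &&& i.val = j.val then (1:ZMod 2) else 0)
        + (if (i.val + mm.val < 2^n ∧ j.val &&& (i.val + mm.val) = j.val) then 1 else 0) := by
    simp only [toepD, polarG, Matrix.of_apply]
    calc (∑ k : Fin (2^n), (if (k.val = i.val ∨ k.val = i.val + mm.val) then (1:ZMod 2) else 0) *
          (if j.val &&& k.val = j.val then 1 else 0))
        = ∑ k : Fin (2^n),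
            ((if k = i then (if j.val &&& k.val = j.val then (1:ZMod 2) else 0) else 0)
            + (if k.val = i.val + mm.val
                then (if j.val &&& k.val = j.val then (1:ZMod 2) else 0) else 0)) := by
          refine Finset.sum_congr rfl fun k _ => ?_
          by_cases h1 : k.val = i.val <;> by_cases h2 : k.val = i.val + mm.val
          · exfalso; omega
          · rw [if_pos (Or.inl h1), if_pos (Fin.ext h1), if_neg h2, add_zero, one_mul]
          · rw [if_pos (Or.inr h2), if_pos h2,
              if_neg (fun he : k = i => h1 (congrArg Fin.val he)), zero_add, one_mul]
          · rw [if_neg (by tauto), if_neg (fun he : k = i => h1 (congrArg Fin.val he)), if_neg h2,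
              zero_mul, add_zero]
      _ = (∑ k : Fin (2^n),
            if k = i then (if j.val &&& k.val = j.val then (1:ZMod 2) else 0) else 0)
          + ∑ k : Fin (2^n), (if k.val = i.val + mm.val
              then (if j.val &&& k.val = j.val then (1:ZMod 2) else 0) else 0) :=
          Finset.sum_add_distrib
      _ = (if j.val &&& i.val = j.val then (1:ZMod 2) else 0)
          + (if (i.val + mm.val < 2^n ∧ j.val &&& (i.val + mm.val) = j.val) then 1 else 0) := by
          congr 1
          · rw [Finset.sum_ite_eq', if_pos (Finset.mem_univ i)]
          · by_cases hlt : i.val + mm.val < 2^n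
            · rw [show (∑ k : Fin (2^n), (if k.val = i.val + mm.val
                  then (if j.val &&& k.val = j.val then (1:ZMod 2) else 0) else 0))
                  = ∑ k : Fin (2^n), (if k = (⟨i.val + mm.val, hlt⟩ : Fin (2^n))
                    then (if j.val &&& k.val = j.val then (1:ZMod 2) else 0) else 0) from
                Finset.sum_congr rfl fun k _ => if_congr
                  (by rw [← Fin.val_eq_val]) rfl rfl]
              rw [Finset.sum_ite_eq', if_pos (Finset.mem_univ _)]
              symm
              refine if_congr ?_ rfl rfl
              exact Iff.intro (fun h => h.2) (fun h => ⟨hlt, h⟩)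
            · rw [Finset.sum_eq_zero fun k _ => if_neg (fun h : k.val = i.val + mm.val => by
                  have := k.isLt; omega),
                if_neg (fun h => hlt h.1)]
  -- assemble
  rw [hRHS, hLHS]
  have h1 : W 0 + ∑ l ∈ s, W l.val
      = if (i.val + mm.val < 2^n ∧ j.val &&& (i.val + mm.val) = j.val) then 1 else 0 := by
    rw [← hfull, hkey]
  rw [← h1, hW0.symm, ← add_assoc, hchar, zero_add]

/-- For `0 ≤ m ≤ N−1`, `D_N^m G_n = G_n ∑_{l : g_{m+1,l+1}=1, 1 ≤ l ≤ N−1} C_N^l`,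
where for `m = 0` the sum of shifts is the identity matrix. -/
theorem stmt7 (n m : ℕ) (hm : m ≤ 2^n - 1) :
    toepD (2^n) m * polarG n =
      polarG n *
        (if m = 0 then 1 else
          ∑ l ∈ Finset.univ.filter
              (fun l : Fin (2^n) => 1 ≤ l.val ∧
                polarG n ⟨m, by have h0 : (0:ℕ) < 2^n := Nat.two_pow_pos n; omega⟩ l = 1),
            cyc (2^n) l.val) := by
  have hN : (0:ℕ) < 2^n := Nat.two_pow_pos n
  by_cases hm0 : m = 0
  · subst hm0
    rw [if_pos rfl, Matrix.mul_one]
    have h1 : toepD (2^n) 0 = 1 := by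
      ext i j
      simp only [toepD, Matrix.of_apply, Matrix.one_apply, Nat.add_zero, or_self,
        Fin.val_eq_val]
      exact if_congr eq_comm rfl rfl
    rw [h1, Matrix.one_mul]
  · rw [if_neg hm0]
    exact main_ne n ⟨m, by omega⟩ (show 1 ≤ m by omega)
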